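/- Let k ≥ 1 be a natural number, let χ be an integer with c := −2χ + 2 − k > 0, and let 0 ≤ b₁ ≤ b₂ ≤ … ≤ b_k be real numbers. Define f(x) = 6·c·Real.arcsin(1/(2·Real.cosh(x/2))) + 2·∑_{i=1}^{k−1} Real.arcsin(Real.cosh(b_i/2)/Real.cosh(x/2)). Then the equation f(x) + 2·Real.arcsin(Real.cosh(b_k/2)/Real.cosh(x/2)) = 2π has a solution x ∈ [b_k, ∞) if and only if f(b_k) ≥ π; moreover, when a solution exists it is unique in [b_k, ∞). -/

import Mathlib

open Real Set Filter Topology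

/-- Lemma F: the equation
`f(x) + 2·arcsin(cosh(b_k/2)/cosh(x/2)) = 2π` has a solution `x ∈ [b_k, ∞)`
if and only if `f(b_k) ≥ π`; and any such solution in `[b_k, ∞)` is unique. -/
theorem stmt_3 (k : ℕ) (hk : 1 ≤ k) (χ : ℤ) (c : ℤ) (hc : c = -2 * χ + 2 - (k : ℤ))
    (hcpos : 0 < c) (b : ℕ → ℝ) (hb0 : 0 ≤ b 1)
    (hbmono : ∀ i j, 1 ≤ i → i ≤ j → j ≤ k → b i ≤ b j)
    (f : ℝ → ℝ)
    (hf : ∀ x, f x = 6 * (c : ℝ) * Real.arcsin (1 / (2 * Real.cosh (x / 2)))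
      + 2 * ∑ i ∈ Finset.Icc 1 (k - 1),
          Real.arcsin (Real.cosh (b i / 2) / Real.cosh (x / 2))) :
    ((∃ x ∈ Set.Ici (b k),
        f x + 2 * Real.arcsin (Real.cosh (b k / 2) / Real.cosh (x / 2)) = 2 * Real.pi)
      ↔ Real.pi ≤ f (b k)) ∧
    (∀ x ∈ Set.Ici (b k), ∀ y ∈ Set.Ici (b k),
      f x + 2 * Real.arcsin (Real.cosh (b k / 2) / Real.cosh (x / 2)) = 2 * Real.pi →
      f y + 2 * Real.arcsin (Real.cosh (b k / 2) / Real.cosh (y / 2)) = 2 * Real.pi →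
      x = y) := by
  have hbk : 0 ≤ b k := hb0.trans (hbmono 1 k le_rfl hk le_rfl)
  have hc1 : (1 : ℝ) ≤ (c : ℝ) := by exact_mod_cast hcpos
  set g : ℝ → ℝ := fun x =>
    f x + 2 * Real.arcsin (Real.cosh (b k / 2) / Real.cosh (x / 2)) with hgdef
  have hg : ∀ x, g x = 6 * (c : ℝ) * Real.arcsin (1 / (2 * Real.cosh (x / 2)))
      + 2 * ∑ i ∈ Finset.Icc 1 (k - 1),
          Real.arcsin (Real.cosh (b i / 2) / Real.cosh (x / 2))
      + 2 * Real.arcsin (Real.cosh (b k / 2) / Real.cosh (x / 2)) := by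
    intro x; simp only [hgdef]; rw [hf x]
  -- value at b k
  have hgbk : g (b k) = f (b k) + Real.pi := by
    simp only [hgdef]
    simp only [div_self (Real.cosh_pos (b k / 2)).ne', Real.arcsin_one]
    ring
  -- strict antitone
  have hanti : StrictAntiOn g (Set.Ici (b k)) := by
    intro x hx y hy hxy
    have hx0 : 0 ≤ x := hbk.trans hx
    have hcx : 0 < Real.cosh (x / 2) := Real.cosh_pos _
    have hcy : 0 < Real.cosh (y / 2) := Real.cosh_pos _
    have hcosh : Real.cosh (x / 2) < Real.cosh (y / 2) := by
      rw [Real.cosh_lt_cosh, abs_of_nonneg (by linarith), abs_of_nonneg (by linarith)]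
      linarith
    have h1 : Real.arcsin (1 / (2 * Real.cosh (y / 2)))
        < Real.arcsin (1 / (2 * Real.cosh (x / 2))) := by
      apply Real.strictMonoOn_arcsin
      · constructor
        · have : (0:ℝ) ≤ 1 / (2 * Real.cosh (y / 2)) := by positivity
          linarith
        · rw [div_le_one (by positivity)]
          nlinarith [Real.one_le_cosh (y / 2)]
      · constructor
        · have : (0:ℝ) ≤ 1 / (2 * Real.cosh (x / 2)) := by positivity
          linarith
        · rw [div_le_one (by positivity)]
          nlinarith [Real.one_le_cosh (x / 2)]
      · apply one_div_lt_one_div_of_lt (by positivity)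
        linarith
    have h2 : ∀ a : ℝ, Real.arcsin (Real.cosh (a / 2) / Real.cosh (y / 2))
        ≤ Real.arcsin (Real.cosh (a / 2) / Real.cosh (x / 2)) := by
      intro a
      apply Real.monotone_arcsin
      apply div_le_div_of_nonneg_left (Real.cosh_pos _).le hcx hcosh.le
    have hsum : (∑ i ∈ Finset.Icc 1 (k - 1),
          Real.arcsin (Real.cosh (b i / 2) / Real.cosh (y / 2)))
        ≤ ∑ i ∈ Finset.Icc 1 (k - 1),
          Real.arcsin (Real.cosh (b i / 2) / Real.cosh (x / 2)) :=
      Finset.sum_le_sum fun i _ => h2 (b i)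
    have h3 := h2 (b k)
    have hmul : 6 * (c : ℝ) * Real.arcsin (1 / (2 * Real.cosh (y / 2)))
        < 6 * (c : ℝ) * Real.arcsin (1 / (2 * Real.cosh (x / 2))) := by
      apply mul_lt_mul_of_pos_left h1 (by linarith)
    rw [hg x, hg y]
    linarith
  -- continuity
  have hcoshc : Continuous fun x : ℝ => Real.cosh (x / 2) :=
    Real.continuous_cosh.comp (continuous_id.div_const 2)
  have harc_cont : ∀ a : ℝ, Continuous fun x : ℝ =>
      Real.arcsin (Real.cosh (a / 2) / Real.cosh (x / 2)) := fun a =>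
    Real.continuous_arcsin.comp (continuous_const.div hcoshc fun x => (Real.cosh_pos _).ne')
  have hcont : Continuous g := by
    rw [funext hg]
    exact ((continuous_const.mul (Real.continuous_arcsin.comp
        (continuous_const.div (continuous_const.mul hcoshc)
          (fun x => (mul_pos two_pos (Real.cosh_pos _)).ne')))).add
      (continuous_const.mul (continuous_finset_sum _ fun i _ => harc_cont (b i)))).add
      (continuous_const.mul (harc_cont (b k)))
  -- tendsto 0 at infinity
  have hcosh_top : Tendsto Real.cosh atTop atTop := by
    apply tendsto_atTop_mono (fun x => ?_)
      (Real.tendsto_exp_atTop.atTop_div_const two_pos)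
    rw [Real.cosh_eq]
    have := (Real.exp_pos (-x)).le
    linarith
  have hT : Tendsto (fun x : ℝ => Real.cosh (x / 2)) atTop atTop :=
    hcosh_top.comp (Tendsto.atTop_div_const two_pos tendsto_id)
  have hratio : ∀ a : ℝ, Tendsto (fun x : ℝ => a / Real.cosh (x / 2)) atTop (nhds 0) :=
    fun a => tendsto_const_nhds.div_atTop hT
  have harc : ∀ a : ℝ, Tendsto (fun x : ℝ =>
      Real.arcsin (Real.cosh (a / 2) / Real.cosh (x / 2))) atTop (nhds 0) := by
    intro a
    have := (Real.continuous_arcsin.tendsto 0).comp (hratio (Real.cosh (a / 2)))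
    simpa [Function.comp_def, Real.arcsin_zero] using this
  have harc1 : Tendsto (fun x : ℝ =>
      Real.arcsin (1 / (2 * Real.cosh (x / 2)))) atTop (nhds 0) := by
    have hT2 : Tendsto (fun x : ℝ => 2 * Real.cosh (x / 2)) atTop atTop :=
      hT.const_mul_atTop two_pos
    have := (Real.continuous_arcsin.tendsto 0).comp
      (tendsto_const_nhds.div_atTop (f := fun _ : ℝ => (1:ℝ)) hT2)
    simpa [Function.comp_def, Real.arcsin_zero] using this
  have hg0 : Tendsto g atTop (nhds 0) := by
    rw [funext hg]
    have := ((harc1.const_mul (6 * (c : ℝ))).add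
      ((tendsto_finset_sum (Finset.Icc 1 (k - 1))
        (fun i _ => harc (b i))).const_mul 2)).add ((harc (b k)).const_mul 2)
    simpa using this
  have h2pi : (0 : ℝ) < 2 * Real.pi := by positivity
  constructor
  · constructor
    · rintro ⟨x, hx, hsol⟩
      have hle : g x ≤ g (b k) := by
        rcases eq_or_lt_of_le (Set.mem_Ici.mp hx) with h | h
        · rw [← h]
        · exact (hanti (self_mem_Ici) hx h).le
      have : g x = 2 * Real.pi := hsol
      rw [hgbk] at hle
      linarith [this ▸ hle]
    · intro hpi
      obtain ⟨N, hN⟩ := eventually_atTop.mp (hg0.eventually_lt_const h2pi)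
      set x₀ : ℝ := max N (b k) with hx₀
      have hbx₀ : b k ≤ x₀ := le_max_right N (b k)
      have hgx₀ : g x₀ < 2 * Real.pi := hN x₀ (le_max_left N (b k))
      have hmem : (2 * Real.pi) ∈ Set.Icc (g x₀) (g (b k)) := by
        constructor
        · exact hgx₀.le
        · rw [hgbk]; linarith
      obtain ⟨x, hx, hgx⟩ := intermediate_value_Icc' hbx₀ hcont.continuousOn hmem
      exact ⟨x, hx.1, hgx⟩
  · intro x hx y hy hgx hgy
    exact hanti.injOn hx hy (by rw [show g x = _ from rfl]; exact hgx.trans hgy.symm)
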